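/- Let ψ₀ be a SIC fiducial vector in odd dimension d. Then the (d+1)/2 vectors x_0, …, x_{(d−1)/2} defined by (x_0)_i = √((d+1)/2)·ψ₀(i)² and, for r ≠ 0, (x_r)_i = √(d+1)·ψ₀(i − 2^{−1}r)·ψ₀(i + 2^{−1}r), form an orthonormal set in ℂ^{ℤ/dℤ}: ⟨x_s, x_r⟩ = δ_{rs}. -/

import Mathlib

open Matrix Complex

/-- `τ = -exp(iπ/d)`. -/
noncomputable def tau (d : ℕ) : ℂ := -Complex.exp (Real.pi * Complex.I / d)

/-- The displacement operator `D_p = D_{i,j}`, with `(r,s)` entry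
`τ^{ij+2js} δ_{r,s+i}` (exponents of the `d`-th root of unity `τ` taken mod `d`). -/
noncomputable def Disp (d : ℕ) [NeZero d] (p : ZMod d × ZMod d) :
    Matrix (ZMod d) (ZMod d) ℂ :=
  Matrix.of fun r s =>
    tau d ^ ((p.1 * p.2 + 2 * p.2 * s).val) * (if r = s + p.1 then 1 else 0)

/-- The standard Hermitian inner product `⟨x, y⟩`, antilinear in the first slot. -/
noncomputable def cInner {n : Type*} [Fintype n] (x y : n → ℂ) : ℂ :=
  ∑ k, star (x k) * y k

/-- The components of `√((d+1)/2)·ψ₀ ⊗ ψ₀` in the symmetric blocks of the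
doubled Weyl representation:
`(x_0)_i = √((d+1)/2)·ψ₀(i)²` and, for `r ≠ 0`,
`(x_r)_i = √(d+1)·ψ₀(i - 2⁻¹r)·ψ₀(i + 2⁻¹r)`. -/
noncomputable def sicX (d : ℕ) [NeZero d] (ψ₀ : ZMod d → ℂ) (r : ℕ) :
    ZMod d → ℂ :=
  if r = 0 then
    fun i => (Real.sqrt (((d : ℝ) + 1) / 2) : ℂ) * ψ₀ i ^ 2
  else
    fun i => (Real.sqrt ((d : ℝ) + 1) : ℂ) *
      ψ₀ (i - (2 : ZMod d)⁻¹ * (r : ZMod d)) * ψ₀ (i + (2 : ZMod d)⁻¹ * (r : ZMod d))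

/-! ### Auxiliary lemmas -/

lemma tau_eq (d : ℕ) (hd : d ≠ 0) :
    tau d = Complex.exp (Real.pi * Complex.I * (d + 1) / d) := by
  have hdc : (d : ℂ) ≠ 0 := Nat.cast_ne_zero.mpr hd
  have h : (Real.pi : ℂ) * Complex.I * (d + 1) / d
      = Real.pi * Complex.I + Real.pi * Complex.I / d := by
    field_simp
  rw [tau, h, Complex.exp_add, Complex.exp_pi_mul_I]; ring

lemma tau_pow_d (d : ℕ) (hodd : Odd d) : tau d ^ d = 1 := by
  have hd : d ≠ 0 := by rintro rfl; simp at hodd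
  have hdc : (d : ℂ) ≠ 0 := Nat.cast_ne_zero.mpr hd
  rw [tau, neg_pow, ← Complex.exp_nat_mul, hodd.neg_one_pow]
  have : (d : ℂ) * (Real.pi * Complex.I / d) = Real.pi * Complex.I := by
    field_simp
  rw [this, Complex.exp_pi_mul_I]
  ring

lemma tau_pow_ne_one (d : ℕ) (hodd : Odd d) (k : ℕ) (h0 : 0 < k) (hk : k < d) :
    tau d ^ k ≠ 1 := by
  have hd : d ≠ 0 := by rintro rfl; simp at hodd
  have hdc : (d : ℂ) ≠ 0 := Nat.cast_ne_zero.mpr hd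
  have hpi : (Real.pi : ℂ) ≠ 0 := by exact_mod_cast Real.pi_ne_zero
  have hI : (Real.pi : ℂ) * Complex.I ≠ 0 := mul_ne_zero hpi Complex.I_ne_zero
  rw [tau_eq d hd, ← Complex.exp_nat_mul]
  intro h
  rw [Complex.exp_eq_one_iff] at h
  obtain ⟨n, hn⟩ := h
  field_simp at hn
  have h2 : ((k : ℂ) * (d + 1)) * (Real.pi * Complex.I)
      = (2 * n * d) * (Real.pi * Complex.I) := by linear_combination (Real.pi * Complex.I) * hn
  have key : (k : ℂ) * (d + 1) = 2 * n * d := mul_right_cancel₀ hI h2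
  have keyz : (k : ℤ) * (d + 1) = 2 * n * d := by exact_mod_cast key
  have hdvd : (d : ℤ) ∣ (k : ℤ) := ⟨2 * n - k, by linarith⟩
  have := Int.le_of_dvd (by exact_mod_cast h0) hdvd
  omega

noncomputable def chi (d : ℕ) [NeZero d] (n : ZMod d) : ℂ := tau d ^ n.val

lemma tau_pow_mod (d : ℕ) (hodd : Odd d) (k : ℕ) :
    tau d ^ (k % d) = tau d ^ k := by
  conv_rhs => rw [← Nat.div_add_mod k d, pow_add, pow_mul, tau_pow_d d hodd,
    one_pow, one_mul]

lemma chi_add (d : ℕ) [NeZero d] (hodd : Odd d) (m n : ZMod d) :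
    chi d (m + n) = chi d m * chi d n := by
  rw [chi, chi, chi, ZMod.val_add, tau_pow_mod d hodd, pow_add]

lemma chi_zero (d : ℕ) [NeZero d] : chi d 0 = 1 := by
  rw [chi, ZMod.val_zero, pow_zero]

lemma chi_mul_eq_pow (d : ℕ) [NeZero d] (hodd : Odd d) (m j : ZMod d) :
    chi d (m * j) = chi d m ^ j.val := by
  rw [chi, chi, ZMod.val_mul, tau_pow_mod d hodd, pow_mul]

lemma chi_mul_chi_neg (d : ℕ) [NeZero d] (hodd : Odd d) (n : ZMod d) :
    chi d n * chi d (-n) = 1 := by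
  rw [← chi_add d hodd, add_neg_cancel, chi_zero]

lemma abs_chi (d : ℕ) [NeZero d] (n : ZMod d) : ‖chi d n‖ = 1 := by
  rw [chi, norm_pow, tau, norm_neg, Complex.norm_exp]
  have : ((Real.pi : ℂ) * Complex.I / d).re = 0 := by
    simp [Complex.div_re]
  rw [this, Real.exp_zero, one_pow]

lemma star_chi (d : ℕ) [NeZero d] (hodd : Odd d) (n : ZMod d) :
    star (chi d n) = chi d (-n) := by
  have h1 : star (chi d n) * chi d n = 1 := by
    rw [Complex.star_def, mul_comm, Complex.mul_conj, Complex.normSq_eq_norm_sq,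
      abs_chi]
    norm_num
  have h2 := chi_mul_chi_neg d hodd n
  calc star (chi d n) = star (chi d n) * (chi d n * chi d (-n)) := by
        rw [h2, mul_one]
    _ = (star (chi d n) * chi d n) * chi d (-n) := by ring
    _ = chi d (-n) := by rw [h1, one_mul]

lemma sum_chi (d : ℕ) [NeZero d] (hodd : Odd d) (m : ZMod d) :
    ∑ j : ZMod d, chi d (m * j) = if m = 0 then (d : ℂ) else 0 := by
  by_cases hm : m = 0
  · simp [hm, chi_zero, Finset.card_univ]
  · simp only [hm, if_false]
    have hz1 : chi d m ≠ 1 := by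
      apply tau_pow_ne_one d hodd
      · exact Nat.pos_of_ne_zero (fun h => hm ((ZMod.val_eq_zero _).mp h))
      · exact ZMod.val_lt m
    have hzd : chi d m ^ d = 1 := by
      rw [chi, ← pow_mul, mul_comm, pow_mul, tau_pow_d d hodd, one_pow]
    calc ∑ j : ZMod d, chi d (m * j) = ∑ j : ZMod d, chi d m ^ j.val := by
          simp [chi_mul_eq_pow d hodd]
      _ = ∑ i ∈ Finset.range d, chi d m ^ i := by
          refine Finset.sum_nbij' (fun j => j.val) (fun i => (i : ZMod d))
            ?_ ?_ ?_ ?_ ?_ <;>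
            simp_all [ZMod.val_lt, ZMod.natCast_val, ZMod.val_cast_of_lt,
              Finset.mem_range, Nat.mod_eq_of_lt]
      _ = 0 := by
          rw [geom_sum_eq hz1, hzd, sub_self, zero_div]

lemma isUnit_two (d : ℕ) [NeZero d] (hodd : Odd d) : IsUnit (2 : ZMod d) := by
  have h : Nat.Coprime 2 d := Nat.coprime_two_left.mpr hodd
  have := (ZMod.isUnit_iff_coprime 2 d).mpr h
  simpa using this

lemma two_mul_eq_zero (d : ℕ) [NeZero d] (hodd : Odd d) (x : ZMod d) :
    2 * x = 0 ↔ x = 0 := by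
  constructor
  · intro hx
    obtain ⟨u, hu⟩ := isUnit_two d hodd
    calc x = ↑u⁻¹ * (2 * x) := by rw [← hu]; simp [← mul_assoc]
      _ = 0 := by rw [hx, mul_zero]
  · intro hx; rw [hx, mul_zero]

lemma f_eval (d : ℕ) [NeZero d] (ψ : ZMod d → ℂ) (i j : ZMod d) :
    cInner ψ ((Disp d (i, j)).mulVec ψ)
      = ∑ k, star (ψ k) * chi d (i * j + 2 * j * (k - i)) * ψ (k - i) := by
  simp only [cInner, Matrix.mulVec, dotProduct, Disp, Matrix.of_apply]
  refine Finset.sum_congr rfl fun k _ => ?_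
  have h : ∀ s : ZMod d,
      tau d ^ ((i * j + 2 * j * s).val) * (if k = s + i then (1:ℂ) else 0) * ψ s
        = if s = k - i then chi d (i * j + 2 * j * (k - i)) * ψ (k - i) else 0 := by
    intro s
    by_cases hs : s = k - i
    · subst hs
      have : k = k - i + i := by ring
      simp [chi, ← this]
    · have : ¬ (k = s + i) := fun h => hs (by rw [h]; ring)
      simp [this, hs]
  rw [Finset.sum_congr rfl fun s _ => h s, Finset.sum_ite_eq' Finset.univ (k - i)]
  simp [mul_assoc]

lemma T_lemma (d : ℕ) [NeZero d] (hodd : Odd d)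
    (ψ : ZMod d → ℂ)
    (hunit : cInner ψ ψ = 1)
    (hsic : ∀ p : ZMod d × ZMod d, p ≠ 0 →
      ‖cInner ψ ((Disp d p).mulVec ψ)‖ ^ 2 = 1 / (d + 1))
    (i₀ c : ZMod d) :
    ∑ k, star (ψ k) * ψ (k - i₀) * ψ (k + c) * star (ψ (k + c - i₀))
      = ((if i₀ = 0 then 1 else 0) + (if c = 0 then 1 else 0)) / ((d : ℂ) + 1) := by
  have hd0 : (d : ℂ) ≠ 0 := Nat.cast_ne_zero.mpr (NeZero.ne d)
  have hd1 : (d : ℂ) + 1 ≠ 0 := by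
    intro h
    have : ((d : ℝ) + 1) = 0 := by exact_mod_cast congrArg Complex.re h
    have : (0:ℝ) < (d:ℝ) + 1 := by positivity
    linarith
  set F : ZMod d → ℂ := fun j => cInner ψ ((Disp d (i₀, j)).mulVec ψ) with hF
  have hDisp0 : (Disp d (0 : ZMod d × ZMod d)).mulVec ψ = ψ := by
    funext r
    simp [Disp, Matrix.mulVec, dotProduct]
  have hfsq : ∀ j : ZMod d,
      F j * star (F j) = if i₀ = 0 ∧ j = 0 then 1 else 1 / ((d : ℂ) + 1) := by
    intro j
    by_cases h : i₀ = 0 ∧ j = 0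
    · obtain ⟨h1, h2⟩ := h
      simp [h1, h2, hF, Prod.mk_zero_zero, hDisp0, hunit]
    · have hp : ((i₀, j) : ZMod d × ZMod d) ≠ 0 := by
        simp only [Prod.ext_iff, Prod.fst_zero, Prod.snd_zero, ne_eq]
        tauto
      have hs := hsic _ hp
      rw [if_neg h, hF]
      rw [Complex.star_def, Complex.mul_conj, Complex.normSq_eq_norm_sq, hs]
      push_cast
      ring
  have hG1 : ∑ j : ZMod d, chi d (2 * c * j) * (F j * star (F j))
      = (d : ℂ) / ((d : ℂ) + 1)
        * ((if i₀ = 0 then 1 else 0) + (if c = 0 then 1 else 0)) := by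
    have step1 : ∀ j : ZMod d, chi d (2 * c * j) * (F j * star (F j))
        = chi d ((2 * c) * j) * (1 / ((d : ℂ) + 1))
          + (if j = 0 then (if i₀ = 0 then 1 - 1 / ((d : ℂ) + 1) else 0) else 0) := by
      intro j
      rw [hfsq j]
      by_cases hj : j = 0
      · subst hj
        by_cases hi : i₀ = 0 <;> simp [hi, chi_zero]
      · have hna : ¬ (i₀ = 0 ∧ j = 0) := by tauto
        rw [if_neg hna, if_neg hj, add_zero]
    rw [Finset.sum_congr rfl fun j _ => step1 j, Finset.sum_add_distrib,
      ← Finset.sum_mul, sum_chi d hodd, Finset.sum_ite_eq' Finset.univ (0 : ZMod d)]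
    have h2c : ((2 : ZMod d) * c = 0) ↔ (c = 0) := two_mul_eq_zero d hodd c
    by_cases hc : c = 0 <;> by_cases hi : i₀ = 0 <;>
      · simp only [hc, hi, h2c, Finset.mem_univ, if_true, if_false, mul_zero, eq_self_iff_true]
        try field_simp
        try ring
  have hG2 : ∑ j : ZMod d, chi d (2 * c * j) * (F j * star (F j))
      = (d : ℂ) * ∑ k, star (ψ k) * ψ (k - i₀) * ψ (k + c) * star (ψ (k + c - i₀)) := by
    have expand : ∀ j : ZMod d, F j * star (F j)
        = ∑ k, ∑ k', (star (ψ k) * chi d (i₀ * j + 2 * j * (k - i₀)) * ψ (k - i₀))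
            * (ψ k' * chi d (-(i₀ * j + 2 * j * (k' - i₀))) * star (ψ (k' - i₀))) := by
      intro j
      simp only [hF]
      rw [f_eval, star_sum, Finset.sum_mul_sum]
      refine Finset.sum_congr rfl fun k _ => Finset.sum_congr rfl fun k' _ => ?_
      rw [star_mul', star_mul', star_star, star_chi d hodd]
      try ring
    calc ∑ j : ZMod d, chi d (2 * c * j) * (F j * star (F j))
        = ∑ j : ZMod d, ∑ k, ∑ k', chi d (2 * c * j) *
            ((star (ψ k) * chi d (i₀ * j + 2 * j * (k - i₀)) * ψ (k - i₀))
              * (ψ k' * chi d (-(i₀ * j + 2 * j * (k' - i₀))) * star (ψ (k' - i₀)))) := by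
          refine Finset.sum_congr rfl fun j _ => ?_
          rw [expand j, Finset.mul_sum]
          exact Finset.sum_congr rfl fun k _ => Finset.mul_sum _ _ _
      _ = ∑ k, ∑ k', ∑ j : ZMod d, chi d (2 * c * j) *
            ((star (ψ k) * chi d (i₀ * j + 2 * j * (k - i₀)) * ψ (k - i₀))
              * (ψ k' * chi d (-(i₀ * j + 2 * j * (k' - i₀))) * star (ψ (k' - i₀)))) := by
          rw [Finset.sum_comm]
          exact Finset.sum_congr rfl fun k _ => Finset.sum_comm
      _ = ∑ k, ∑ k', (star (ψ k) * ψ (k - i₀) * ψ k' * star (ψ (k' - i₀)))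
            * (if k' = k + c then (d : ℂ) else 0) := by
          refine Finset.sum_congr rfl fun k _ => Finset.sum_congr rfl fun k' _ => ?_
          have hterm : ∀ j : ZMod d, chi d (2 * c * j)
              * (chi d (i₀ * j + 2 * j * (k - i₀))
                * chi d (-(i₀ * j + 2 * j * (k' - i₀))))
              = chi d ((2 * (c + k - k')) * j) := by
            intro j
            rw [← chi_add d hodd, ← chi_add d hodd]
            congr 1; ring
          have step : ∀ j : ZMod d, chi d (2 * c * j) *
              ((star (ψ k) * chi d (i₀ * j + 2 * j * (k - i₀)) * ψ (k - i₀))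
                * (ψ k' * chi d (-(i₀ * j + 2 * j * (k' - i₀))) * star (ψ (k' - i₀))))
              = (star (ψ k) * ψ (k - i₀) * ψ k' * star (ψ (k' - i₀)))
                * chi d ((2 * (c + k - k')) * j) := by
            intro j
            rw [← hterm j]; ring
          rw [Finset.sum_congr rfl fun j _ => step j, ← Finset.mul_sum,
            sum_chi d hodd]
          congr 1
          have hcond : ((2 : ZMod d) * (c + k - k') = 0) ↔ (k' = k + c) := by
            rw [two_mul_eq_zero d hodd]
            constructor
            · intro h; have : k' = c + k := by linear_combination -h
              rw [this]; ring
            · intro h; rw [h]; ring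
          by_cases h : k' = k + c
          · rw [if_pos (hcond.mpr h), if_pos h]
          · rw [if_neg (fun hh => h (hcond.mp hh)), if_neg h]
      _ = (d : ℂ) * ∑ k, star (ψ k) * ψ (k - i₀) * ψ (k + c) * star (ψ (k + c - i₀)) := by
          rw [Finset.mul_sum]
          refine Finset.sum_congr rfl fun k _ => ?_
          simp only [mul_ite, mul_zero]
          rw [Finset.sum_ite_eq' Finset.univ (k + c)]
          simp only [Finset.mem_univ, if_true]
          have : k + c - i₀ = k + c - i₀ := rfl
          ring
  have hrhs : (d : ℂ) / ((d : ℂ) + 1)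
      * ((if i₀ = 0 then 1 else 0) + (if c = 0 then 1 else 0))
      = (d : ℂ) * (((if i₀ = 0 then (1:ℂ) else 0) + (if c = 0 then 1 else 0))
          / ((d : ℂ) + 1)) := by
    ring
  exact mul_left_cancel₀ hd0 (hG2.symm.trans (hG1.trans hrhs))

lemma L_lemma (d : ℕ) [NeZero d] (hodd : Odd d)
    (ψ : ZMod d → ℂ)
    (hunit : cInner ψ ψ = 1)
    (hsic : ∀ p : ZMod d × ZMod d, p ≠ 0 →
      ‖cInner ψ ((Disp d p).mulVec ψ)‖ ^ 2 = 1 / (d + 1))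
    (a b : ZMod d) :
    ∑ i, star (ψ (i - b)) * star (ψ (i + b)) * (ψ (i - a) * ψ (i + a))
      = ((if a - b = 0 then 1 else 0) + (if a + b = 0 then 1 else 0))
        / ((d : ℂ) + 1) := by
  calc ∑ i, star (ψ (i - b)) * star (ψ (i + b)) * (ψ (i - a) * ψ (i + a))
      = ∑ k, star (ψ k) * ψ (k - (a - b)) * ψ (k + (a + b))
          * star (ψ (k + (a + b) - (a - b))) := by
        apply Fintype.sum_equiv (Equiv.subRight b)
        intro i
        have e1 : i - b - (a - b) = i - a := by ring
        have e2 : i - b + (a + b) = i + a := by ring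
        have e3 : i - b + (a + b) - (a - b) = i + b := by ring
        simp only [Equiv.subRight_apply, e1, e2, e3]
        ring
    _ = _ := T_lemma d hodd ψ hunit hsic (a - b) (a + b)

/-- For a SIC fiducial vector `ψ₀` in odd dimension `d`, the `(d+1)/2` vectors
`x_0, …, x_{(d-1)/2}` form an orthonormal set in `ℂ^{ℤ/dℤ}`. -/
theorem sicX_orthonormal
    (d : ℕ) [NeZero d] (hodd : Odd d) (hd : 3 ≤ d)
    (ψ₀ : ZMod d → ℂ)
    (hunit : cInner ψ₀ ψ₀ = 1)
    (hsic : ∀ p : ZMod d × ZMod d, p ≠ 0 →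
      ‖cInner ψ₀ ((Disp d p).mulVec ψ₀)‖ ^ 2 = 1 / (d + 1)) :
    ∀ r s : ℕ, r ≤ (d - 1) / 2 → s ≤ (d - 1) / 2 →
      cInner (sicX d ψ₀ s) (sicX d ψ₀ r) = if r = s then 1 else 0 := by
  intro r s hr hs
  obtain ⟨m, hm⟩ := id hodd
  have hd1 : (d : ℂ) + 1 ≠ 0 := by
    intro h
    have h2 : ((d : ℝ) + 1) = 0 := by exact_mod_cast congrArg Complex.re h
    have : (0:ℝ) < (d:ℝ) + 1 := by positivity
    linarith
  have hcast : ∀ t : ℕ, 0 < t → t < d → ((t : ZMod d) ≠ 0) := by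
    intro t h0 hlt h
    rw [ZMod.natCast_eq_zero_iff] at h
    have := Nat.le_of_dvd h0 h
    omega
  have h2unit : IsUnit (2 : ZMod d) := isUnit_two d hodd
  have hhalf : ∀ x : ZMod d, x ≠ 0 → (2 : ZMod d)⁻¹ * x ≠ 0 := by
    intro x hx h
    apply hx
    calc x = (2 : ZMod d) * ((2 : ZMod d)⁻¹ * x) := by
          rw [← mul_assoc, ZMod.mul_inv_of_unit _ h2unit, one_mul]
      _ = 0 := by rw [h, mul_zero]
  have hL := L_lemma d hodd ψ₀ hunit hsic
  have hsqrt1 : ((Real.sqrt ((d:ℝ) + 1) : ℝ) : ℂ) * ((Real.sqrt ((d:ℝ) + 1) : ℝ) : ℂ)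
      = (d : ℂ) + 1 := by
    rw [← Complex.ofReal_mul, Real.mul_self_sqrt (by positivity)]
    push_cast; ring
  have hsqrt2 : ((Real.sqrt (((d:ℝ) + 1)/2) : ℝ) : ℂ) * ((Real.sqrt (((d:ℝ) + 1)/2) : ℝ) : ℂ)
      = ((d : ℂ) + 1) / 2 := by
    rw [← Complex.ofReal_mul, Real.mul_self_sqrt (by positivity)]
    push_cast; ring
  have hX0 : sicX d ψ₀ 0
      = fun i => ((Real.sqrt (((d:ℝ) + 1)/2) : ℝ) : ℂ) * ψ₀ i ^ 2 := by
    rw [sicX, if_pos rfl]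
  by_cases hr0 : r = 0 <;> by_cases hs0 : s = 0
  · -- r = 0, s = 0
    subst hr0; subst hs0
    have key : cInner (sicX d ψ₀ 0) (sicX d ψ₀ 0)
        = (((Real.sqrt (((d:ℝ) + 1)/2) : ℝ) : ℂ) * ((Real.sqrt (((d:ℝ) + 1)/2) : ℝ) : ℂ))
          * ∑ i, star (ψ₀ (i - 0)) * star (ψ₀ (i + 0)) * (ψ₀ (i - 0) * ψ₀ (i + 0)) := by
      rw [cInner, Finset.mul_sum]
      refine Finset.sum_congr rfl fun i _ => ?_
      simp only [hX0, sub_zero, add_zero, Complex.star_def, _root_.map_mul, map_pow,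
        Complex.conj_ofReal]
      ring
    rw [key, hL 0 0, hsqrt2]
    norm_num
    field_simp
  · -- r = 0, s ≠ 0
    have hXs : sicX d ψ₀ s = fun i =>
        ((Real.sqrt ((d:ℝ) + 1) : ℝ) : ℂ)
          * ψ₀ (i - (2 : ZMod d)⁻¹ * (s : ZMod d))
          * ψ₀ (i + (2 : ZMod d)⁻¹ * (s : ZMod d)) := by
      rw [sicX, if_neg hs0]
    have hb : (2 : ZMod d)⁻¹ * (s : ZMod d) ≠ 0 :=
      hhalf _ (hcast s (Nat.pos_of_ne_zero hs0) (by omega))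
    have key : cInner (sicX d ψ₀ s) (sicX d ψ₀ 0)
        = (((Real.sqrt ((d:ℝ) + 1) : ℝ) : ℂ) * ((Real.sqrt (((d:ℝ) + 1)/2) : ℝ) : ℂ))
          * ∑ i, star (ψ₀ (i - (2 : ZMod d)⁻¹ * (s : ZMod d)))
              * star (ψ₀ (i + (2 : ZMod d)⁻¹ * (s : ZMod d)))
              * (ψ₀ (i - 0) * ψ₀ (i + 0)) := by
      rw [cInner, Finset.mul_sum]
      refine Finset.sum_congr rfl fun i _ => ?_
      simp only [hX0, hXs, sub_zero, add_zero, Complex.star_def, _root_.map_mul, map_pow,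
        Complex.conj_ofReal]
      ring
    rw [hr0, key, hL 0 ((2 : ZMod d)⁻¹ * (s : ZMod d))]
    have h1 : ¬((0 : ZMod d) - 2⁻¹ * (s : ZMod d) = 0) := by
      simpa [zero_sub, neg_eq_zero] using hb
    have h2 : ¬((0 : ZMod d) + 2⁻¹ * (s : ZMod d) = 0) := by
      simpa [zero_add] using hb
    rw [if_neg h1, if_neg h2, if_neg (by omega : ¬ (0 : ℕ) = s)]
    simp
  · -- r ≠ 0, s = 0
    have hXr : sicX d ψ₀ r = fun i =>
        ((Real.sqrt ((d:ℝ) + 1) : ℝ) : ℂ)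
          * ψ₀ (i - (2 : ZMod d)⁻¹ * (r : ZMod d))
          * ψ₀ (i + (2 : ZMod d)⁻¹ * (r : ZMod d)) := by
      rw [sicX, if_neg hr0]
    have ha : (2 : ZMod d)⁻¹ * (r : ZMod d) ≠ 0 :=
      hhalf _ (hcast r (Nat.pos_of_ne_zero hr0) (by omega))
    have key : cInner (sicX d ψ₀ 0) (sicX d ψ₀ r)
        = (((Real.sqrt ((d:ℝ) + 1) : ℝ) : ℂ) * ((Real.sqrt (((d:ℝ) + 1)/2) : ℝ) : ℂ))
          * ∑ i, star (ψ₀ (i - 0)) * star (ψ₀ (i + 0))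
              * (ψ₀ (i - (2 : ZMod d)⁻¹ * (r : ZMod d))
                * ψ₀ (i + (2 : ZMod d)⁻¹ * (r : ZMod d))) := by
      rw [cInner, Finset.mul_sum]
      refine Finset.sum_congr rfl fun i _ => ?_
      simp only [hX0, hXr, sub_zero, add_zero, Complex.star_def, _root_.map_mul, map_pow,
        Complex.conj_ofReal]
      ring
    rw [hs0, key, hL ((2 : ZMod d)⁻¹ * (r : ZMod d)) 0]
    have h1 : ¬((2 : ZMod d)⁻¹ * (r : ZMod d) - 0 = 0) := by
      simpa [sub_zero] using ha
    have h2 : ¬((2 : ZMod d)⁻¹ * (r : ZMod d) + 0 = 0) := by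
      simpa [add_zero] using ha
    rw [if_neg h1, if_neg h2, if_neg (by omega : ¬ r = 0)]
    simp
  · -- r ≠ 0, s ≠ 0
    have hXr : sicX d ψ₀ r = fun i =>
        ((Real.sqrt ((d:ℝ) + 1) : ℝ) : ℂ)
          * ψ₀ (i - (2 : ZMod d)⁻¹ * (r : ZMod d))
          * ψ₀ (i + (2 : ZMod d)⁻¹ * (r : ZMod d)) := by
      rw [sicX, if_neg hr0]
    have hXs : sicX d ψ₀ s = fun i =>
        ((Real.sqrt ((d:ℝ) + 1) : ℝ) : ℂ)
          * ψ₀ (i - (2 : ZMod d)⁻¹ * (s : ZMod d))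
          * ψ₀ (i + (2 : ZMod d)⁻¹ * (s : ZMod d)) := by
      rw [sicX, if_neg hs0]
    set a : ZMod d := (2 : ZMod d)⁻¹ * (r : ZMod d) with hadef
    set b : ZMod d := (2 : ZMod d)⁻¹ * (s : ZMod d) with hbdef
    have key : cInner (sicX d ψ₀ s) (sicX d ψ₀ r)
        = (((Real.sqrt ((d:ℝ) + 1) : ℝ) : ℂ) * ((Real.sqrt ((d:ℝ) + 1) : ℝ) : ℂ))
          * ∑ i, star (ψ₀ (i - b)) * star (ψ₀ (i + b))
              * (ψ₀ (i - a) * ψ₀ (i + a)) := by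
      rw [cInner, Finset.mul_sum]
      refine Finset.sum_congr rfl fun i _ => ?_
      simp only [hXr, hXs, Complex.star_def, _root_.map_mul, map_pow, Complex.conj_ofReal]
      ring
    have habsum : a + b ≠ 0 := by
      have : a + b = (2 : ZMod d)⁻¹ * (((r + s : ℕ) : ZMod d)) := by
        rw [hadef, hbdef]; push_cast; ring
      rw [this]
      exact hhalf _ (hcast (r + s) (by omega) (by omega))
    rw [key, hL a b, hsqrt1, if_neg habsum]
    by_cases hrs : r = s
    · subst hrs
      rw [if_pos (by rw [hadef, hbdef, sub_self]), if_pos rfl]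
      field_simp
      norm_num
    · have hab : a - b ≠ 0 := by
        have hne : (r : ZMod d) ≠ (s : ZMod d) := by
          intro h
          apply hrs
          have := congrArg ZMod.val h
          rwa [ZMod.val_cast_of_lt (by omega), ZMod.val_cast_of_lt (by omega)]
            at this
        have : a - b = (2 : ZMod d)⁻¹ * ((r : ZMod d) - (s : ZMod d)) := by
          rw [hadef, hbdef]; ring
        rw [this]
        exact hhalf _ (sub_ne_zero.mpr hne)
      rw [if_neg hab, if_neg hrs]
      simp
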